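/- There exists a bijection B from the positive integers onto the set of all even binary partitions (of all even sums, including the empty partition) such that B_1 is the empty partition, the sums |B_k| are nondecreasing in k, and for every k the partition B_{k+1} is obtained from B_k either by an elementary move with k \ge 1 (i.e., replacing two copies of 2^j, j \ge 1, by one copy of 2^{j+1}, or vice versa) or by adding a single new part equal to 2. -/

import Mathlib

/-- An even binary partition: a multiset of parts, each a power of two that is at least 2. -/
def IsEvenBinaryPartition (P : Multiset ℕ) : Prop := ∀ p ∈ P, ∃ k : ℕ, 1 ≤ k ∧ p = 2 ^ k

/-- `P` and `Q` differ by an elementary move with `k ≥ 1`: `Q` is obtained from `P`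
by removing two copies of `2^k` and adding one copy of `2^(k+1)`, or vice versa. -/
def EvenElementaryMove (P Q : Multiset ℕ) : Prop :=
  ∃ k : ℕ, 1 ≤ k ∧
    (Q + {2 ^ k, 2 ^ k} = P + {2 ^ (k + 1)} ∨ P + {2 ^ k, 2 ^ k} = Q + {2 ^ (k + 1)})

def L : ℕ → List (Multiset ℕ)
  | 0 => [0]
  | n + 1 =>
    let prev := ((L n).reverse.map (· + ({1} : Multiset ℕ)))
    if (n + 1) % 2 = 0 then
      prev ++ ((L ((n + 1) / 2)).map (Multiset.map (2 * ·)))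
    else prev
decreasing_by all_goals omega

lemma L_odd (n : ℕ) (h : (n+1) % 2 = 1) :
    L (n+1) = ((L n).reverse.map (· + ({1} : Multiset ℕ))) := by
  simp [L, h]

lemma L_even (n : ℕ) (h : (n+1) % 2 = 0) :
    L (n+1) = ((L n).reverse.map (· + ({1} : Multiset ℕ)))
      ++ ((L ((n + 1) / 2)).map (Multiset.map (2 * ·))) := by
  simp [L, h]

lemma L_ne_nil (n : ℕ) : L n ≠ [] := by
  induction n with
  | zero => simp [L]
  | succ n ih =>
    rcases Nat.mod_two_eq_zero_or_one (n+1) with h | h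
    · rw [L_even n h]; simp [ih]
    · rw [L_odd n h]; simp [ih]

lemma L_getLast?_some (n : ℕ) : ∃ y, (L n).getLast? = some y :=
  Option.isSome_iff_exists.1 (List.getLast?_isSome.2 (L_ne_nil n))

lemma L_head? (n : ℕ) :
    (L (n+1)).head? = ((L n).getLast?).map (· + ({1} : Multiset ℕ)) := by
  obtain ⟨y, hy⟩ := L_getLast?_some n
  rcases Nat.mod_two_eq_zero_or_one (n+1) with h | h
  · rw [L_even n h, List.head?_append]; simp [hy]
  · rw [L_odd n h]; simp [hy]

lemma L_getLast?_even (m : ℕ) :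
    (L (2*m)).getLast? = ((L m).getLast?).map (Multiset.map (2 * ·)) := by
  rcases m with _ | m
  · simp [L]
  · have h2 : 2 * (m+1) = (2*m+1) + 1 := by ring
    have hmod : ((2*m+1)+1) % 2 = 0 := by omega
    have hdiv : ((2*m+1)+1) / 2 = m + 1 := by omega
    rw [h2, L_even _ hmod, hdiv, List.getLast?_append]
    obtain ⟨y, hy⟩ := L_getLast?_some (m+1)
    simp [hy]

def Move (P Q : Multiset ℕ) : Prop :=
  ∃ j : ℕ, Q + {2 ^ j, 2 ^ j} = P + {2 ^ (j + 1)} ∨ P + {2 ^ j, 2 ^ j} = Q + {2 ^ (j + 1)}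

lemma Move.symm {P Q : Multiset ℕ} (h : Move P Q) : Move Q P := by
  obtain ⟨j, h⟩ := h; exact ⟨j, h.symm⟩

lemma Move.add {P Q : Multiset ℕ} (R : Multiset ℕ) (h : Move P Q) : Move (P + R) (Q + R) := by
  obtain ⟨j, h | h⟩ := h
  · exact ⟨j, Or.inl (by rw [add_right_comm, h, add_right_comm])⟩
  · exact ⟨j, Or.inr (by rw [add_right_comm, h, add_right_comm])⟩

lemma Move.double {P Q : Multiset ℕ} (h : Move P Q) :
    Move (P.map (2 * ·)) (Q.map (2 * ·)) := by
  obtain ⟨j, h | h⟩ := h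
  · refine ⟨j + 1, Or.inl ?_⟩
    have := congrArg (Multiset.map (2 * ·)) h
    simpa [Multiset.map_add, pow_succ, mul_comm, mul_assoc, mul_left_comm,
      Multiset.insert_eq_cons] using this
  · refine ⟨j + 1, Or.inr ?_⟩
    have := congrArg (Multiset.map (2 * ·)) h
    simpa [Multiset.map_add, pow_succ, mul_comm, mul_assoc, mul_left_comm,
      Multiset.insert_eq_cons] using this

lemma L_chain : ∀ n, List.IsChain Move (L n) := by
  intro n
  induction n using Nat.strong_induction_on with
  | _ n ih =>
    match n with
    | 0 => simp [L]
    | n + 1 =>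
      have hprev : List.IsChain Move ((L n).reverse.map (· + ({1} : Multiset ℕ))) := by
        rw [List.isChain_map]
        rw [List.isChain_reverse]
        exact (ih n (by omega)).imp (fun a b h => (h.symm.add {1}))
      rcases Nat.mod_two_eq_zero_or_one (n+1) with h | h
      · rw [L_even n h]
        refine List.isChain_append.2 ⟨hprev, ?_, ?_⟩
        · rw [List.isChain_map]
          exact (ih ((n+1)/2) (by omega)).imp (fun a b h => h.double)
        · intro x hx y hy
          -- n is odd, n = n' + 1 with n' even
          obtain ⟨n', rfl⟩ : ∃ n', n = n' + 1 := ⟨n - 1, by omega⟩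
          have hn' : n' % 2 = 0 := by omega
          obtain ⟨q, hq⟩ := L_getLast?_some (n' / 2)
          have h1 : (L (n'+1)).head? = some (q.map (2 * ·) + {1}) := by
            rw [L_head?]
            have : (L n').getLast? = some (q.map (2 * ·)) := by
              have := L_getLast?_even (n' / 2)
              rw [Nat.mul_div_cancel' ⟨n'/2, by omega⟩] at this
              rw [this, hq]; rfl
            rw [this]; rfl
          have h2 : (L ((n'+1+1)/2)).head? = some (q + {1}) := by
            have : (n'+1+1)/2 = n'/2 + 1 := by omega
            rw [this, L_head?, hq]; rfl
          rw [List.getLast?_map, List.getLast?_reverse, h1] at hx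
          rw [List.head?_map, h2] at hy
          simp only [Option.mem_def, Option.map_some, Option.some.injEq] at hx hy
          subst hx; subst hy
          refine ⟨0, Or.inl ?_⟩
          simp only [Multiset.map_add, Multiset.map_singleton, pow_zero, pow_one,
            Nat.mul_one]
          have h11 : ({1,1} : Multiset ℕ) = {1} + {1} := rfl
          rw [h11]
          abel_nf
          exact congrArg _ (add_comm _ _)
      · rw [L_odd n h]; exact hprev

lemma L_mem_sum : ∀ n, ∀ P ∈ L n, P.sum = n ∧ ∀ p ∈ P, ∃ j : ℕ, p = 2 ^ j := by
  intro n
  induction n using Nat.strong_induction_on with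
  | _ n ih =>
    match n with
    | 0 => intro P hP; simp [L] at hP; simp [hP]
    | n + 1 =>
      intro P hP
      have hprev : ∀ P ∈ (L n).reverse.map (· + ({1} : Multiset ℕ)),
          P.sum = n + 1 ∧ ∀ p ∈ P, ∃ j : ℕ, p = 2 ^ j := by
        intro P hP
        simp only [List.mem_map, List.mem_reverse] at hP
        obtain ⟨q, hq, rfl⟩ := hP
        obtain ⟨hs, hpw⟩ := ih n (by omega) q hq
        constructor
        · simp [hs]
        · intro p hp
          rcases Multiset.mem_add.1 hp with hp | hp
          · exact hpw p hp
          · exact ⟨0, by simpa using hp⟩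
      rcases Nat.mod_two_eq_zero_or_one (n+1) with h | h
      · rw [L_even n h] at hP
        rcases List.mem_append.1 hP with hP | hP
        · exact hprev P hP
        · simp only [List.mem_map] at hP
          obtain ⟨q, hq, rfl⟩ := hP
          obtain ⟨hs, hpw⟩ := ih ((n+1)/2) (by omega) q hq
          constructor
          · rw [Multiset.sum_map_mul_left]
            simp [hs]; omega
          · intro p hp
            simp only [Multiset.mem_map] at hp
            obtain ⟨a, ha, rfl⟩ := hp
            obtain ⟨j, rfl⟩ := hpw a ha
            exact ⟨j + 1, by ring⟩
      · rw [L_odd n h] at hP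
        exact hprev P hP

lemma L_complete : ∀ n, ∀ P : Multiset ℕ, P.sum = n → (∀ p ∈ P, ∃ j : ℕ, p = 2 ^ j) →
    P ∈ L n := by
  intro n
  induction n using Nat.strong_induction_on with
  | _ n ih =>
    match n with
    | 0 =>
      intro P hs hpw
      have : P = 0 := by
        refine Multiset.eq_zero_of_forall_notMem (fun a ha => ?_)
        obtain ⟨j, rfl⟩ := hpw a ha
        have h0 := Multiset.sum_eq_zero_iff.1 hs _ ha
        exact pow_ne_zero j (by norm_num) h0
      simp [L, this]
    | n + 1 =>
      intro P hs hpw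
      by_cases h1 : (1 : ℕ) ∈ P
      · -- P = Q + {1} with Q ∈ L n
        obtain ⟨Q, rfl⟩ : ∃ Q, P = Q + {1} := by
          refine ⟨P.erase 1, ?_⟩
          rw [add_comm, Multiset.singleton_add, Multiset.cons_erase h1]
        have hQ : Q ∈ L n := by
          apply ih n (by omega)
          · have := hs; simp at this; omega
          · intro p hp; exact hpw p (Multiset.mem_add.2 (Or.inl hp))
        have hmem : Q + {1} ∈ (L n).reverse.map (· + ({1} : Multiset ℕ)) := by
          simp only [List.mem_map, List.mem_reverse]
          exact ⟨Q, hQ, rfl⟩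
        rcases Nat.mod_two_eq_zero_or_one (n+1) with h | h
        · rw [L_even n h]; exact List.mem_append.2 (Or.inl hmem)
        · rw [L_odd n h]; exact hmem
      · -- all parts even
        have heven : ∀ p ∈ P, 2 ∣ p := by
          intro p hp
          obtain ⟨j, rfl⟩ := hpw p hp
          match j with
          | 0 => exact absurd hp (by simpa using h1)
          | j + 1 => exact ⟨2 ^ j, by ring⟩
        have hPsum_even : 2 ∣ P.sum := Multiset.dvd_sum (fun p hp => heven p hp)
        have hne : (n+1) % 2 = 0 := by omega
        set Q : Multiset ℕ := P.map (· / 2) with hQdef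
        have hPQ : P = Q.map (2 * ·) := by
          rw [hQdef, Multiset.map_map]
          refine ((Multiset.map_congr rfl ?_).trans (Multiset.map_id P)).symm
          intro p hp
          obtain ⟨c, rfl⟩ := heven p hp
          simp [Nat.mul_div_cancel_left c (by norm_num : 0 < 2)]
        have hQsum : Q.sum = (n+1)/2 := by
          have : (Q.map (2 * ·)).sum = n + 1 := by rw [← hPQ]; exact hs
          rw [Multiset.sum_map_mul_left] at this
          simp at this; omega
        have hQpw : ∀ q ∈ Q, ∃ j : ℕ, q = 2 ^ j := by
          intro q hq
          rw [hQdef] at hq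
          simp only [Multiset.mem_map] at hq
          obtain ⟨p, hp, rfl⟩ := hq
          obtain ⟨j, rfl⟩ := hpw p hp
          match j with
          | 0 => exact absurd hp (by simpa using h1)
          | j + 1 => exact ⟨j, by rw [pow_succ, Nat.mul_div_cancel _ (by norm_num)]⟩
        have hQmem : Q ∈ L ((n+1)/2) := ih ((n+1)/2) (by omega) Q hQsum hQpw
        rw [L_even n hne]
        refine List.mem_append.2 (Or.inr ?_)
        simp only [List.mem_map]
        exact ⟨Q, hQmem, hPQ.symm⟩

lemma L_nodup : ∀ n, (L n).Nodup := by
  intro n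
  induction n using Nat.strong_induction_on with
  | _ n ih =>
    match n with
    | 0 => simp [L]
    | n + 1 =>
      have hprev : ((L n).reverse.map (· + ({1} : Multiset ℕ))).Nodup := by
        refine List.Nodup.map ?_ (List.nodup_reverse.2 (ih n (by omega)))
        intro a b hab
        simpa using hab
      rcases Nat.mod_two_eq_zero_or_one (n+1) with h | h
      · rw [L_even n h]
        refine List.Nodup.append hprev ?_ ?_
        · refine List.Nodup.map ?_ (ih ((n+1)/2) (by omega))
          intro a b hab
          exact Multiset.map_injective (fun x y => by omega) hab
        · intro x hx hy
          simp only [List.mem_map, List.mem_reverse] at hx hy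
          obtain ⟨q, _, rfl⟩ := hx
          obtain ⟨r, _, hr⟩ := hy
          have h1 : (1:ℕ) ∈ q + ({1} : Multiset ℕ) := Multiset.mem_add.2 (Or.inr (by simp))
          rw [← hr] at h1
          simp only [Multiset.mem_map] at h1
          obtain ⟨a, _, ha⟩ := h1
          omega
      · rw [L_odd n h]; exact hprev

/-- The doubling map. -/
def D (P : Multiset ℕ) : Multiset ℕ := P.map (2 * ·)

/-- Global list: concatenation of doubled blocks. -/
def J : ℕ → List (Multiset ℕ)
  | 0 => (L 0).map D
  | n + 1 => J n ++ (L (n + 1)).map D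

lemma J_length (n : ℕ) : n + 1 ≤ (J n).length := by
  induction n with
  | zero => simp [J, L]
  | succ n ih =>
    have : (L (n+1)).map D ≠ [] := by simp [L_ne_nil]
    have h1 : 1 ≤ ((L (n+1)).map D).length := by
      cases hl : (L (n+1)).map D with
      | nil => exact absurd hl this
      | cons a l => simp
    simp only [J, List.length_append]
    omega

lemma J_prefix {m n : ℕ} (h : m ≤ n) : J m <+: J n := by
  induction n with
  | zero => have : m = 0 := by omega
            subst this; exact List.prefix_refl _
  | succ n ih =>
    rcases Nat.lt_or_ge m (n+1) with h' | h'
    · exact (ih (by omega)).trans ⟨(L (n+1)).map D, rfl⟩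
    · have : m = n + 1 := by omega
      subst this; exact List.prefix_refl _

def g (i : ℕ) : Multiset ℕ := (J i).getD i 0

lemma g_eq {n i : ℕ} (h : i < (J n).length) : (J n).getD i 0 = g i := by
  unfold g
  rcases Nat.le_total i n with hle | hle
  · obtain ⟨t, ht⟩ := J_prefix hle
    have := J_length i
    rw [← ht, List.getD_append _ _ _ _ (by omega)]
  · obtain ⟨t, ht⟩ := J_prefix hle
    rw [← ht, List.getD_append _ _ _ _ h]

lemma J_mem {n : ℕ} {x : Multiset ℕ} :
    x ∈ J n ↔ ∃ m ≤ n, ∃ P ∈ L m, x = D P := by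
  induction n with
  | zero =>
    simp only [J, List.mem_map]
    constructor
    · rintro ⟨P, hP, rfl⟩; exact ⟨0, le_refl _, P, hP, rfl⟩
    · rintro ⟨m, hm, P, hP, rfl⟩
      have : m = 0 := by omega
      subst this; exact ⟨P, hP, rfl⟩
  | succ n ih =>
    simp only [J, List.mem_append, List.mem_map, ih]
    constructor
    · rintro (⟨m, hm, P, hP, rfl⟩ | ⟨P, hP, rfl⟩)
      · exact ⟨m, by omega, P, hP, rfl⟩
      · exact ⟨n+1, le_refl _, P, hP, rfl⟩
    · rintro ⟨m, hm, P, hP, rfl⟩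
      rcases Nat.lt_or_ge m (n+1) with h' | h'
      · exact Or.inl ⟨m, by omega, P, hP, rfl⟩
      · have : m = n + 1 := by omega
        subst this; exact Or.inr ⟨P, hP, rfl⟩

lemma D_injective : Function.Injective D :=
  Multiset.map_injective (fun x y h => by omega)

lemma J_nodup (n : ℕ) : (J n).Nodup := by
  induction n with
  | zero =>
    refine List.Nodup.map D_injective ?_
    exact L_nodup 0
  | succ n ih =>
    refine List.Nodup.append ih (List.Nodup.map D_injective (L_nodup (n+1))) ?_
    intro x hx hy
    rw [J_mem] at hx
    obtain ⟨m, hm, P, hP, rfl⟩ := hx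
    simp only [List.mem_map] at hy
    obtain ⟨Q, hQ, hQe⟩ := hy
    have h1 : P.sum = m := (L_mem_sum m P hP).1
    have h2 : Q.sum = n + 1 := (L_mem_sum (n+1) Q hQ).1
    have : P = Q := D_injective hQe.symm
    subst this; omega


lemma Move.doubleE {P Q : Multiset ℕ} (h : Move P Q) :
    EvenElementaryMove (D P) (D Q) := by
  obtain ⟨j, h | h⟩ := h
  · refine ⟨j + 1, by omega, Or.inl ?_⟩
    have := congrArg (Multiset.map (2 * ·)) h
    simpa [D, Multiset.map_add, pow_succ, mul_comm, mul_assoc, mul_left_comm,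
      Multiset.insert_eq_cons] using this
  · refine ⟨j + 1, by omega, Or.inr ?_⟩
    have := congrArg (Multiset.map (2 * ·)) h
    simpa [D, Multiset.map_add, pow_succ, mul_comm, mul_assoc, mul_left_comm,
      Multiset.insert_eq_cons] using this

/-- Relation between consecutive elements of the global sequence. -/
def R (P Q : Multiset ℕ) : Prop := EvenElementaryMove P Q ∨ Q = P + {2}

lemma J_chain (n : ℕ) : List.IsChain R (J n) := by
  induction n with
  | zero =>
    show List.IsChain R ((L 0).map D)
    simp [L]
  | succ n ih =>
    rw [J]
    refine List.isChain_append.2 ⟨ih, ?_, ?_⟩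
    · rw [List.isChain_map]
      exact (L_chain (n+1)).imp (fun a b h => Or.inl h.doubleE)
    · intro x hx y hy
      -- last of J n is last of block n, which is D (getLast (L n))
      obtain ⟨q, hq⟩ := L_getLast?_some n
      have hlast : (J n).getLast? = some (D q) := by
        have hblock : ((L n).map D).getLast? = some (D q) := by
          rw [List.getLast?_map, hq]; rfl
        cases n with
        | zero => exact hblock
        | succ m =>
          rw [J, List.getLast?_append]
          rw [hblock]; rfl
      have hhead : ((L (n+1)).map D).head? = some (D q + {2}) := by
        rw [List.head?_map, L_head?, hq]
        simp only [Option.map_some, Option.some.injEq]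
        simp [D, Multiset.map_add]
      rw [hlast] at hx
      rw [hhead] at hy
      simp only [Option.mem_def, Option.some.injEq] at hx hy
      subst hx; subst hy
      exact Or.inr rfl

lemma g_getElem {n i : ℕ} (h : i < (J n).length) : (J n)[i] = g i := by
  rw [← List.getD_eq_getElem _ 0 h]; exact g_eq h

lemma g_adj (i : ℕ) : R (g i) (g (i + 1)) := by
  have hlen := J_length (i + 1)
  have hchain := List.isChain_iff_getElem.1 (J_chain (i + 1))
  have h := hchain i (by omega)
  rwa [g_getElem (by omega), g_getElem (by omega)] at h

lemma g_mem (i : ℕ) : g i ∈ J i := by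
  have h : i < (J i).length := by have := J_length i; omega
  rw [← g_getElem h]
  exact List.getElem_mem h

lemma g_injective : Function.Injective g := by
  intro i j hij
  set n := max i j with hn
  have hi : i < (J n).length := by have := J_length n; omega
  have hj : j < (J n).length := by have := J_length n; omega
  have hg : (J n).get ⟨i, hi⟩ = (J n).get ⟨j, hj⟩ := by
    simp only [List.get_eq_getElem]
    rw [g_getElem hi, g_getElem hj, hij]
  have := (List.Nodup.get_inj_iff (J_nodup n)).1 hg
  exact congrArg Fin.val this

lemma g_zero : g 0 = 0 := by
  show (J 0).getD 0 0 = 0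
  simp [J, L, D]

lemma g_partition (i : ℕ) : IsEvenBinaryPartition (g i) := by
  obtain ⟨m, _, P, hP, hD⟩ := J_mem.1 (g_mem i)
  intro p hp
  rw [hD] at hp
  simp only [D, Multiset.mem_map] at hp
  obtain ⟨a, ha, rfl⟩ := hp
  obtain ⟨j, rfl⟩ := (L_mem_sum m P hP).2 a ha
  exact ⟨j + 1, by omega, by ring⟩

lemma g_surj (P : Multiset ℕ) (hP : IsEvenBinaryPartition P) : ∃ i, g i = P := by
  have heven : ∀ p ∈ P, 2 ∣ p := by
    intro p hp
    obtain ⟨k, hk, rfl⟩ := hP p hp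
    exact dvd_pow_self 2 (by omega)
  set Q : Multiset ℕ := P.map (· / 2) with hQdef
  have hPQ : P = D Q := by
    rw [hQdef, D, Multiset.map_map]
    refine ((Multiset.map_congr rfl ?_).trans (Multiset.map_id P)).symm
    intro p hp
    obtain ⟨c, rfl⟩ := heven p hp
    simp [Nat.mul_div_cancel_left c (by norm_num : 0 < 2)]
  have hQpw : ∀ q ∈ Q, ∃ j : ℕ, q = 2 ^ j := by
    intro q hq
    rw [hQdef] at hq
    simp only [Multiset.mem_map] at hq
    obtain ⟨p, hp, rfl⟩ := hq
    obtain ⟨k, hk, rfl⟩ := hP p hp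
    obtain ⟨k, rfl⟩ : ∃ k', k = k' + 1 := ⟨k - 1, by omega⟩
    exact ⟨k, by rw [pow_succ, Nat.mul_div_cancel _ (by norm_num)]⟩
  have hQmem : Q ∈ L Q.sum := L_complete Q.sum Q rfl hQpw
  have hPJ : P ∈ J Q.sum := J_mem.2 ⟨Q.sum, le_refl _, Q, hQmem, hPQ⟩
  obtain ⟨⟨idx, hidx⟩, hget⟩ := List.mem_iff_get.1 hPJ
  refine ⟨idx, ?_⟩
  rw [← g_eq hidx, List.getD_eq_getElem _ 0 hidx]
  simpa using hget

lemma move_sum {P Q : Multiset ℕ} (h : EvenElementaryMove P Q) : P.sum = Q.sum := by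
  obtain ⟨k, _, h | h⟩ := h
  all_goals {
    have := congrArg Multiset.sum h
    simp only [Multiset.sum_add, Multiset.insert_eq_cons, Multiset.sum_cons,
      Multiset.sum_singleton] at this
    have h2 : (2:ℕ) ^ (k+1) = 2 ^ k + 2 ^ k := by ring
    omega
  }

lemma g_sum_mono : Monotone (fun i => (g i).sum) := by
  refine monotone_nat_of_le_succ (fun i => ?_)
  rcases g_adj i with h | h
  · rw [move_sum h]
  · rw [h]; simp

theorem gray_sequence_even_binary_partitions :
    ∃ B : ℕ+ → Multiset ℕ,
      (∀ k, IsEvenBinaryPartition (B k)) ∧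
      Function.Injective B ∧
      (∀ P : Multiset ℕ, IsEvenBinaryPartition P → ∃ k, B k = P) ∧
      B 1 = 0 ∧
      Monotone (fun k => (B k).sum) ∧
      (∀ k, EvenElementaryMove (B k) (B (k + 1)) ∨ B (k + 1) = B k + {2}) := by
  refine ⟨fun k => g ((k : ℕ) - 1), fun k => g_partition _, ?_, ?_, ?_, ?_, ?_⟩
  · intro k l hkl
    have := g_injective hkl
    have hk := k.pos
    have hl := l.pos
    exact PNat.coe_injective (by omega)
  · intro P hP
    obtain ⟨i, hi⟩ := g_surj P hP
    exact ⟨⟨i + 1, by omega⟩, by simpa using hi⟩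
  · simpa using g_zero
  · intro k l hkl
    have h1 : (k:ℕ) ≤ (l:ℕ) := hkl
    exact g_sum_mono (by omega)
  · intro k
    show EvenElementaryMove (g ((k:ℕ) - 1)) (g (((k+1:ℕ+):ℕ) - 1)) ∨
      g (((k+1:ℕ+):ℕ) - 1) = g ((k:ℕ) - 1) + {2}
    have h1 : ((k + 1 : ℕ+) : ℕ) - 1 = ((k : ℕ) - 1) + 1 := by
      have := k.pos
      simp only [PNat.add_coe, PNat.one_coe]
      omega
    rw [h1]
    exact g_adj ((k : ℕ) - 1)
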